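/- For every ε ∈ [0,1] and every (u,q) ∈ V × L, one has (1−ε)·α·‖q‖_{L̃} ≤ Z + ‖u‖_V, where Z := sup over nonzero (v,w) ∈ V × L of C_ε((u,q),(v,w)) / ‖(v,w)‖_{X_ε}. -/

import Mathlib

open scoped RealInnerProductSpace

/-- For every `ε ∈ [0,1]` and `(u,q) ∈ V × L`, one has
`(1−ε)·α·‖q‖_{L̃} ≤ Z + ‖u‖_V`, where `Z` is the supremum over nonzero
`(v,w) ∈ V × L` of `C_ε((u,q),(v,w)) / ‖(v,w)‖_{X_ε}`. -/
theorem stmt2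
    {V L Lt : Type*}
    [NormedAddCommGroup V] [InnerProductSpace ℝ V]
    [NormedAddCommGroup L] [InnerProductSpace ℝ L]
    [NormedAddCommGroup Lt] [NormedSpace ℝ Lt]
    (j : L →ₗ[ℝ] Lt) (hj : ∀ q : L, ‖j q‖ ≤ ‖q‖)
    (b : Lt →ₗ[ℝ] V →ₗ[ℝ] ℝ)
    (hb : ∀ (q : Lt) (v : V), |b q v| ≤ ‖q‖ * ‖v‖)
    (α : ℝ) (hα : 0 < α)
    (hbinf : ∀ q : Lt, α * ‖q‖ ≤ ⨆ v : {v : V // v ≠ 0}, b q (v : V) / ‖(v : V)‖)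
    (ε : ℝ) (hε0 : 0 ≤ ε) (hε1 : ε ≤ 1)
    (u : V) (q : L) :
    (1 - ε) * α * ‖j q‖
      ≤ (⨆ p : {p : V × L // p ≠ 0},
          (⟪u, (p : V × L).1⟫ + (1 - ε) * b (j q) (p : V × L).1
              + b (j (p : V × L).2) u - ε * ⟪q, (p : V × L).2⟫)
            / Real.sqrt (‖(p : V × L).1‖ ^ 2 + ‖j (p : V × L).2‖ ^ 2
                + ε * ‖(p : V × L).2‖ ^ 2))
        + ‖u‖ := by
  set S : {p : V × L // p ≠ 0} → ℝ := fun p =>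
    (⟪u, (p : V × L).1⟫ + (1 - ε) * b (j q) (p : V × L).1
        + b (j (p : V × L).2) u - ε * ⟪q, (p : V × L).2⟫)
      / Real.sqrt (‖(p : V × L).1‖ ^ 2 + ‖j (p : V × L).2‖ ^ 2
          + ε * ‖(p : V × L).2‖ ^ 2) with hS
  set Z : ℝ := ⨆ p, S p with hZ
  -- the denominator
  have hDv : ∀ p : V × L, ‖p.1‖ ≤ Real.sqrt (‖p.1‖ ^ 2 + ‖j p.2‖ ^ 2 + ε * ‖p.2‖ ^ 2) := by
    intro p
    have h1 : ‖p.1‖ ^ 2 ≤ ‖p.1‖ ^ 2 + ‖j p.2‖ ^ 2 + ε * ‖p.2‖ ^ 2 := by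
      nlinarith [sq_nonneg ‖j p.2‖, mul_nonneg hε0 (sq_nonneg ‖p.2‖)]
    calc ‖p.1‖ = Real.sqrt (‖p.1‖ ^ 2) := by
          rw [Real.sqrt_sq (norm_nonneg _)]
      _ ≤ _ := Real.sqrt_le_sqrt h1
  have hDw : ∀ p : V × L, ‖j p.2‖ ≤ Real.sqrt (‖p.1‖ ^ 2 + ‖j p.2‖ ^ 2 + ε * ‖p.2‖ ^ 2) := by
    intro p
    have h1 : ‖j p.2‖ ^ 2 ≤ ‖p.1‖ ^ 2 + ‖j p.2‖ ^ 2 + ε * ‖p.2‖ ^ 2 := by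
      nlinarith [sq_nonneg ‖p.1‖, mul_nonneg hε0 (sq_nonneg ‖p.2‖)]
    calc ‖j p.2‖ = Real.sqrt (‖j p.2‖ ^ 2) := by
          rw [Real.sqrt_sq (norm_nonneg _)]
      _ ≤ _ := Real.sqrt_le_sqrt h1
  have hDew : ∀ p : V × L, ε * ‖p.2‖ ≤ Real.sqrt (‖p.1‖ ^ 2 + ‖j p.2‖ ^ 2 + ε * ‖p.2‖ ^ 2) := by
    intro p
    have h1 : (ε * ‖p.2‖) ^ 2 ≤ ‖p.1‖ ^ 2 + ‖j p.2‖ ^ 2 + ε * ‖p.2‖ ^ 2 := by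
      have : ε * ε ≤ ε := by nlinarith
      nlinarith [sq_nonneg ‖p.1‖, sq_nonneg ‖j p.2‖, sq_nonneg ‖p.2‖]
    calc ε * ‖p.2‖ = Real.sqrt ((ε * ‖p.2‖) ^ 2) := by
          rw [Real.sqrt_sq (by positivity)]
      _ ≤ _ := Real.sqrt_le_sqrt h1
  -- bound on S
  have hSle : ∀ p, S p ≤ 2 * ‖u‖ + 2 * ‖q‖ := by
    intro p
    have hM : (0:ℝ) ≤ 2 * ‖u‖ + 2 * ‖q‖ := by positivity
    simp only [hS]
    rcases eq_or_lt_of_le (Real.sqrt_nonneg (‖(p : V × L).1‖ ^ 2 + ‖j (p : V × L).2‖ ^ 2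
        + ε * ‖(p : V × L).2‖ ^ 2)) with h0 | h0
    · rw [← h0, div_zero]; exact hM
    · rw [div_le_iff₀ h0]
      have h1 : ⟪u, (p : V × L).1⟫ ≤ ‖u‖ * ‖(p : V × L).1‖ := real_inner_le_norm _ _
      have h2 : (1 - ε) * b (j q) (p : V × L).1 ≤ ‖q‖ * ‖(p : V × L).1‖ := by
        have := (abs_le.mp (hb (j q) (p : V × L).1)).2
        have hjq := hj q
        nlinarith [(abs_le.mp (hb (j q) (p : V × L).1)).1, norm_nonneg (p : V × L).1,
          norm_nonneg (j q), norm_nonneg q]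
      have h3 : b (j (p : V × L).2) u ≤ ‖j (p : V × L).2‖ * ‖u‖ :=
        (abs_le.mp (hb _ _)).2
      have h4 : -ε * ⟪q, (p : V × L).2⟫ ≤ ‖q‖ * (ε * ‖(p : V × L).2‖) := by
        have := abs_real_inner_le_norm q (p : V × L).2
        have h5 := (abs_le.mp this).1
        nlinarith [norm_nonneg q, norm_nonneg (p : V × L).2]
      have d1 := hDv (p : V × L)
      have d2 := hDw (p : V × L)
      have d3 := hDew (p : V × L)
      nlinarith [norm_nonneg u, norm_nonneg q, norm_nonneg (p : V × L).1,
        norm_nonneg (j (p : V × L).2), h0.le]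
  have hbdd : BddAbove (Set.range S) := by
    refine ⟨2 * ‖u‖ + 2 * ‖q‖, ?_⟩
    rintro x ⟨p, rfl⟩
    exact hSle p
  -- Z is nonnegative
  have hZ0 : 0 ≤ Z := by
    rcases isEmpty_or_nonempty {p : V × L // p ≠ 0} with hE | hE
    · rw [hZ, Real.iSup_of_isEmpty]
    · by_cases huq : ((u, -q) : V × L) = 0
      · obtain ⟨p⟩ := hE
        have hu : u = 0 := congrArg Prod.fst huq
        have hq : q = 0 := by
          have := congrArg Prod.snd huq
          simpa using this
        have : S p = 0 := by
          rw [hS]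
          simp [hu, hq]
        calc (0:ℝ) = S p := this.symm
          _ ≤ Z := le_ciSup hbdd p
      · have hSp : 0 ≤ S ⟨(u, -q), huq⟩ := by
          rw [hS]
          apply div_nonneg _ (Real.sqrt_nonneg _)
          simp only [map_neg, LinearMap.neg_apply, inner_neg_right, real_inner_self_eq_norm_sq]
          have hbu := abs_le.mp (hb (j q) u)
          have hjq := hj q
          have h6 : ε * b (j q) u ≤ ε * (‖q‖ * ‖u‖) :=
            mul_le_mul_of_nonneg_left
              (le_trans hbu.2 (mul_le_mul_of_nonneg_right hjq (norm_nonneg u))) hε0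
          nlinarith [mul_nonneg hε0 (sq_nonneg (‖u‖ - ‖q‖)),
            mul_nonneg hε0 (mul_nonneg (norm_nonneg q) (norm_nonneg u)),
            mul_nonneg (by linarith : (0:ℝ) ≤ 1 - ε) (sq_nonneg ‖u‖)]
        calc (0:ℝ) ≤ S ⟨(u, -q), huq⟩ := hSp
          _ ≤ Z := le_ciSup hbdd _
  -- key step: test with (v, 0)
  have step1 : ∀ v : V, v ≠ 0 → (1 - ε) * b (j q) v / ‖v‖ ≤ Z + ‖u‖ := by
    intro v hv
    have hvn : (0:ℝ) < ‖v‖ := norm_pos_iff.mpr hv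
    have hp : ((v, (0:L)) : V × L) ≠ 0 := by
      simp [Prod.ext_iff, hv]
    have hSval : S ⟨(v, 0), hp⟩ = (⟪u, v⟫ + (1 - ε) * b (j q) v) / ‖v‖ := by
      rw [hS]
      simp [Real.sqrt_sq (norm_nonneg v)]
    have hle : (1 - ε) * b (j q) v / ‖v‖ - ‖u‖ ≤ S ⟨(v, 0), hp⟩ := by
      rw [hSval]
      have hin : -(‖u‖ * ‖v‖) ≤ ⟪u, v⟫ := by
        have := abs_real_inner_le_norm u v
        linarith [(abs_le.mp this).1]
      have : (1 - ε) * b (j q) v / ‖v‖ - ‖u‖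
          = ((1 - ε) * b (j q) v - ‖u‖ * ‖v‖) / ‖v‖ := by
        field_simp
      rw [this, div_le_div_iff₀ hvn hvn]
      nlinarith
    have := le_ciSup hbdd ⟨((v, 0) : V × L), hp⟩
    linarith [this, hle]
  -- conclude
  rcases le_or_gt ((1 - ε) * α * ‖j q‖) 0 with hle | hlt
  · linarith [norm_nonneg u]
  · have h1e : 0 < 1 - ε := by
      rcases lt_or_ge 0 (1 - ε) with h | h
      · exact h
      · exfalso
        nlinarith [mul_nonneg hα.le (norm_nonneg (j q))]
    have hNE : Nonempty {v : V // v ≠ 0} := by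
      by_contra hE
      rw [not_nonempty_iff] at hE
      have := hbinf (j q)
      rw [Real.iSup_of_isEmpty] at this
      nlinarith [mul_nonneg hα.le (norm_nonneg (j q))]
    have hT : (⨆ v : {v : V // v ≠ 0}, b (j q) (v : V) / ‖(v : V)‖)
        ≤ (Z + ‖u‖) / (1 - ε) := by
      apply ciSup_le
      intro v
      rw [le_div_iff₀ h1e]
      have := step1 (v : V) v.2
      calc b (j q) (v : V) / ‖(v : V)‖ * (1 - ε)
          = (1 - ε) * b (j q) (v : V) / ‖(v : V)‖ := by ring
        _ ≤ Z + ‖u‖ := this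
    have := hbinf (j q)
    have h2 : α * ‖j q‖ ≤ (Z + ‖u‖) / (1 - ε) := le_trans this hT
    rw [le_div_iff₀ h1e] at h2
    calc (1 - ε) * α * ‖j q‖ = α * ‖j q‖ * (1 - ε) := by ring
      _ ≤ Z + ‖u‖ := h2
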